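/- Let V → M be a smooth vector bundle, D a connection on V, A a 1-form on M with values in End(V) such that (d^D A)_{X,Y} := D_X(A_Y) − D_Y(A_X) − A_{[X,Y]} = 0 and A_X A_Y = A_Y A_X for all vector fields X, Y, and let u be a section of V with A_Y(D_Z u) = A_Z(D_Y u) for all Y, Z. Assume the map F: TM → V, F(X) := A_X(u), is a bundle isomorphism. Then: (i) the multiplication X∘Y := F^{-1}( A_X A_Y u ) on vector fields is commutative and associative with unit field F^{-1}(u); (ii) the pull-back connection (F*D)_X(Y) := F^{-1}( D_X( F(Y) ) ) is torsion-free and compatible with ∘, and in particular (M, ∘, F^{-1}(u)) is an F-manifold. -/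

import Mathlib

/-- An algebraic model of the geometric setting of the paper: `R` plays the role
of the ring `C^∞(M)` of smooth functions on a manifold `M`, and `V` plays the
role of the `C^∞(M)`-module of smooth vector fields on `M`, equipped with its
Lie bracket and with the action of vector fields on functions by derivations. -/
structure SmoothSetting (R V : Type*) [CommRing R] [LieRing V] [Module R V] where
  /-- the action `X(f)` of a vector field `X` on a function `f` -/
  deriv : V → R → R
  deriv_add : ∀ (X : V) (f g : R), deriv X (f + g) = deriv X f + deriv X g
  deriv_mul : ∀ (X : V) (f g : R), deriv X (f * g) = deriv X f * g + f * deriv X g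
  add_deriv : ∀ (X Y : V) (f : R), deriv (X + Y) f = deriv X f + deriv Y f
  smul_deriv : ∀ (f : R) (X : V) (g : R), deriv (f • X) g = f * deriv X g
  bracket_deriv : ∀ (X Y : V) (f : R),
    deriv ⁅X, Y⁆ f = deriv X (deriv Y f) - deriv Y (deriv X f)
  bracket_smul : ∀ (X : V) (f : R) (Y : V), ⁅X, f • Y⁆ = f • ⁅X, Y⁆ + deriv X f • Y

/-- `(m, e)` is an F-manifold structure: `m` is a fiber-preserving (i.e.
`C^∞(M)`-bilinear) commutative associative multiplication on vector fields with
unit field `e`, satisfying the Hertling–Manin integrability condition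
`L_{X∘Y}(∘) = X ∘ L_Y(∘) + Y ∘ L_X(∘)`. -/
structure IsFManifold (R : Type*) {V : Type*} [CommRing R] [LieRing V] [Module R V]
    (m : V → V → V) (e : V) : Prop where
  add_left : ∀ X Y Z : V, m (X + Y) Z = m X Z + m Y Z
  smul_left : ∀ (f : R) (X Y : V), m (f • X) Y = f • m X Y
  comm : ∀ X Y : V, m X Y = m Y X
  assoc : ∀ X Y Z : V, m (m X Y) Z = m X (m Y Z)
  unit : ∀ X : V, m e X = X
  hertling_manin : ∀ X Y Z W : V,
    ⁅m X Y, m Z W⁆ - m ⁅m X Y, Z⁆ W - m Z ⁅m X Y, W⁆ =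
      m X (⁅Y, m Z W⁆ - m ⁅Y, Z⁆ W - m Z ⁅Y, W⁆)
        + m Y (⁅X, m Z W⁆ - m ⁅X, Z⁆ W - m Z ⁅X, W⁆)

/-- The dual multiplication `X * Y := X ∘ Y ∘ ε⁻¹` determined by an invertible
vector field `ε` with inverse `εinv`. -/
def dualMul {V : Type*} (m : V → V → V) (εinv : V) : V → V → V :=
  fun X Y => m (m X Y) εinv

/-- `ε` (with inverse `εinv`) is an eventual identity on the F-manifold `(m, e)`:
it is invertible and the dual multiplication `X * Y = X ∘ Y ∘ ε⁻¹` defines an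
F-manifold structure on `M` with unit field `ε`. -/
def IsEventualIdentity (R : Type*) {V : Type*} [CommRing R] [LieRing V] [Module R V]
    (m : V → V → V) (e ε εinv : V) : Prop :=
  m ε εinv = e ∧ IsFManifold R (dualMul m εinv) ε

/-- `nabla` is a (Koszul) connection on the tangent bundle, i.e. on vector fields. -/
structure IsConnection {R V : Type*} [CommRing R] [LieRing V] [Module R V]
    (S : SmoothSetting R V) (nabla : V → V → V) : Prop where
  add_left : ∀ X Y Z : V, nabla (X + Y) Z = nabla X Z + nabla Y Z
  smul_left : ∀ (f : R) (X Y : V), nabla (f • X) Y = f • nabla X Y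
  add_right : ∀ X Y Z : V, nabla X (Y + Z) = nabla X Y + nabla X Z
  leibniz : ∀ (X : V) (f : R) (Y : V), nabla X (f • Y) = S.deriv X f • Y + f • nabla X Y

/-- `nabla` is torsion-free. -/
def IsTorsionFree {V : Type*} [LieRing V] (nabla : V → V → V) : Prop :=
  ∀ X Y, nabla X Y - nabla Y X = ⁅X, Y⁆

/-- The covariant derivative `∇_X(∘)(Y, Z)` of a multiplication `m` with respect
to a connection `nabla`. -/
def covMul {V : Type*} [LieRing V] (nabla m : V → V → V) (X Y Z : V) : V :=
  nabla X (m Y Z) - m (nabla X Y) Z - m Y (nabla X Z)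

/-- `nabla` is compatible with the multiplication `m`: the vector valued tensor
`∇(∘)` is totally symmetric. -/
def IsCompatible {V : Type*} [LieRing V] (nabla m : V → V → V) : Prop :=
  ∀ X Y Z, covMul nabla m X Y Z = covMul nabla m Y X Z ∧
    covMul nabla m X Y Z = covMul nabla m X Z Y

/-- The curvature `R^∇_{X,Y}Z = ∇_X∇_Y Z − ∇_Y∇_X Z − ∇_{[X,Y]}Z`. -/
def curv {V : Type*} [LieRing V] (nabla : V → V → V) (X Y Z : V) : V :=
  nabla X (nabla Y Z) - nabla Y (nabla X Z) - nabla ⁅X, Y⁆ Z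

/-- `nabla` is flat. -/
def IsFlat {V : Type*} [LieRing V] (nabla : V → V → V) : Prop :=
  ∀ X Y Z, curv nabla X Y Z = 0

/-- The curvature condition
`V∘R_{Z,Y}X + Y∘R_{V,Z}X + Z∘R_{Y,V}X = 0` of Lorenzoni–Pedroni. -/
def CurvCircCond {V : Type*} [LieRing V] (m nabla : V → V → V) : Prop :=
  ∀ X Y Z W, m W (curv nabla Z Y X) + m Y (curv nabla W Z X)
    + m Z (curv nabla Y W X) = 0

/-- A special family of connections on the F-manifold `(m, e)`: the family of
all `∇̃^V_X(Y) = ∇̃_X(Y) + V∘X∘Y`, `V` a vector field, where `∇̃` is some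
torsion-free connection compatible with `m`. -/
def IsSpecialFamily {R V : Type*} [CommRing R] [LieRing V] [Module R V]
    (S : SmoothSetting R V) (m : V → V → V) (SF : Set (V → V → V)) : Prop :=
  ∃ nt : V → V → V, IsConnection S nt ∧ IsTorsionFree nt ∧ IsCompatible nt m ∧
    SF = { n | ∃ W : V, n = fun X Y => nt X Y + m (m W X) Y }

/-- The connection `∇^W_X(Y) = ε∘∇̃_X(ε⁻¹∘Y) − ∇̃_{ε⁻¹∘Y}(ε)∘X + W*X*Y` on the
dual F-manifold, where `*` is the dual multiplication. -/
def dualConn {V : Type*} [LieRing V] (m : V → V → V) (ε εinv : V)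
    (nt : V → V → V) (W : V) : V → V → V :=
  fun X Y => m ε (nt X (m εinv Y)) - m (nt (m εinv Y) ε) X
    + dualMul m εinv (dualMul m εinv W X) Y

/-- The dual family `D_ε(S̃)` built from a chosen connection `nt ∈ S̃`. -/
def dualFamily {V : Type*} [LieRing V] (m : V → V → V) (ε εinv : V)
    (nt : V → V → V) : Set (V → V → V) :=
  { n | ∃ W : V, n = dualConn m ε εinv nt W }

/-- The dual family `D_ε(S̃)` of a family of connections `S̃`. -/
def dualFamilyOfSet {V : Type*} [LieRing V] (m : V → V → V) (ε εinv : V)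
    (SF : Set (V → V → V)) : Set (V → V → V) :=
  { n | ∃ nt ∈ SF, ∃ W : V, n = dualConn m ε εinv nt W }

/-- The second structure connection
`∇^F_X(Y) = ε∘∇̃_X(ε⁻¹∘Y) − ∇̃_{ε⁻¹∘Y}(ε)∘X` of `(M, ∘, e, ε, ∇̃)`. -/
def secondConn {V : Type*} [LieRing V] (m : V → V → V) (ε εinv : V)
    (nt : V → V → V) : V → V → V :=
  fun X Y => m ε (nt X (m εinv Y)) - m (nt (m εinv Y) ε) X

/-- The connection
`∇_X(Y) = ε∘∇̃_X(ε⁻¹∘Y) − ∇̃_{ε⁻¹∘Y}(ε)∘X + (1/2)[ε⁻¹,ε]∘X∘Y + U*X*Y`. -/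
def uDualConn {V : Type*} [LieRing V] [Module ℚ V] (m : V → V → V)
    (ε εinv U : V) (nt : V → V → V) : V → V → V :=
  fun X Y => secondConn m ε εinv nt X Y + (2 : ℚ)⁻¹ • m (m ⁅εinv, ε⁆ X) Y
    + dualMul m εinv (dualMul m εinv U X) Y

/-- The `k`-th power `X^k` of a vector field with respect to the multiplication
`m` with unit `e`. -/
def mpow {V : Type*} (m : V → V → V) (e X : V) : ℕ → V
  | 0 => e
  | k + 1 => m X (mpow m e X k)

/-- The Legendre transformation `L_u(S̃) = { u⁻¹∘∇̃_X(u∘Y) : ∇̃ ∈ S̃ }` of a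
family of connections `S̃` by an invertible vector field `u` (with inverse
`uinv`). -/
def legFamily {V : Type*} (m : V → V → V) (uinv u : V)
    (SF : Set (V → V → V)) : Set (V → V → V) :=
  { n | ∃ nt ∈ SF, n = fun X Y => m uinv (nt X (m u Y)) }

/-- Hertling's theorem: a commutative associative multiplication admitting a
torsion-free compatible connection satisfies the Hertling–Manin condition. -/
lemma hm_aux {V : Type*} [LieRing V] (m : V → V → V)
    (hadd : ∀ X Y Z : V, m (X + Y) Z = m X Z + m Y Z)
    (hcomm : ∀ X Y : V, m X Y = m Y X)
    (hassoc : ∀ X Y Z : V, m (m X Y) Z = m X (m Y Z))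
    (n : V → V → V) (htf : IsTorsionFree n) (hc : IsCompatible n m) :
    ∀ X Y Z W : V,
      ⁅m X Y, m Z W⁆ - m ⁅m X Y, Z⁆ W - m Z ⁅m X Y, W⁆ =
      m X (⁅Y, m Z W⁆ - m ⁅Y, Z⁆ W - m Z ⁅Y, W⁆)
        + m Y (⁅X, m Z W⁆ - m ⁅X, Z⁆ W - m Z ⁅X, W⁆) := by
  have madd_r : ∀ a b c : V, m a (b + c) = m a b + m a c := fun a b c => by
    rw [hcomm, hadd, hcomm b a, hcomm c a]
  have msub_l : ∀ a b c : V, m (a - b) c = m a c - m b c := fun a b c =>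
    (AddMonoidHom.mk' (fun x => m x c) (fun x y => hadd x y c)).map_sub a b
  have msub_r : ∀ a b c : V, m a (b - c) = m a b - m a c := fun a b c =>
    (AddMonoidHom.mk' (m a) (madd_r a)).map_sub b c
  have hnm : ∀ a b c : V, n a (m b c) = covMul n m a b c + m (n a b) c + m b (n a c) := by
    intro a b c; simp only [covMul]; abel
  have hsym1 : ∀ a b c : V, covMul n m a b c = covMul n m b a c := fun a b c => (hc a b c).1
  have hsym2 : ∀ a b c : V, covMul n m a b c = covMul n m a c b := fun a b c => (hc a b c).2
  have rot : ∀ a b c : V, covMul n m a b c = covMul n m b c a := fun a b c =>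
    (hsym1 a b c).trans (hsym2 b a c)
  have swap1 : ∀ a b c : V, m (m a b) c = m b (m a c) := fun a b c => by
    rw [hcomm a b, hassoc]
  have swap2 : ∀ a b c : V, m a (m b c) = m c (m a b) := fun a b c => by
    rw [← hassoc, hcomm]
  have swap3 : ∀ a b c : V, m a (m b c) = m b (m a c) := fun a b c => by
    rw [← hassoc, hcomm a b, hassoc]
  have hbr : ∀ a b : V, ⁅a, b⁆ = n a b - n b a := fun a b => (htf a b).symm
  have star : ∀ a b c d : V,
      covMul n m a (m b c) d + m (covMul n m a b c) d =
      covMul n m a b (m c d) + m b (covMul n m a c d) := by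
    intro a b c d
    simp only [covMul, msub_l, msub_r, hassoc]
    abel
  intro X Y Z W
  have Lform : ∀ a b c : V, ⁅a, m b c⁆ - m ⁅a, b⁆ c - m b ⁅a, c⁆ =
      covMul n m a b c - n (m b c) a + m (n b a) c + m b (n c a) := by
    intro a b c
    simp only [hbr]
    rw [hnm a b c, msub_l, msub_r]
    abel
  rw [Lform (m X Y) Z W, Lform Y Z W, Lform X Z W]
  rw [hnm (m Z W) X Y, hnm Z X Y, hnm W X Y]
  simp only [hadd, madd_r, msub_r]
  rw [hcomm (n (m Z W) X) Y]
  rw [swap1 (n Z X) Y W]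
  rw [hassoc X (n Z Y) W]
  rw [swap2 Z (n W X) Y]
  rw [swap3 Z X (n W Y)]
  rw [hcomm (covMul n m Z X Y) W]
  have e1 := star Z W X Y
  rw [← rot (m X Y) Z W, ← rot X Z W, hcomm (covMul n m X Z W) Y] at e1
  have e1' := eq_sub_of_add_eq e1.symm
  have e2 := star Y Z W X
  rw [rot Y (m Z W) X, rot Y Z (m W X), hcomm (covMul n m Y Z W) X, rot Y W X] at e2
  have e2' := eq_sub_of_add_eq e2.symm
  rw [e1', e2']
  abel

/-- **Proposition 9.1.** Let `E → M` be an external vector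
bundle with a connection `D`, an `End(E)`-valued `1`-form `A` with `d^D A = 0`
and `A_X A_Y = A_Y A_X`, and a section `u` with `A_Y(D_Z u) = A_Z(D_Y u)`, such
that `F(X) := A_X(u)` is a bundle isomorphism `TM → E`. Then the multiplication
`X∘Y := F⁻¹(A_X A_Y u)` is commutative and associative with unit `F⁻¹(u)`, the
pull-back connection `(F*D)_X(Y) := F⁻¹(D_X(F(Y)))` is torsion-free and
compatible with `∘`, and `(M, ∘, F⁻¹(u))` is an F-manifold. -/
theorem statement17 {R V E : Type*} [CommRing R] [LieRing V] [Module R V]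
    [AddCommGroup E] [Module R E]
    (S : SmoothSetting R V)
    (D : V → E → E)
    (hD_addl : ∀ (X Y : V) (w : E), D (X + Y) w = D X w + D Y w)
    (hD_smull : ∀ (f : R) (X : V) (w : E), D (f • X) w = f • D X w)
    (hD_addr : ∀ (X : V) (w w' : E), D X (w + w') = D X w + D X w')
    (hD_leib : ∀ (X : V) (f : R) (w : E), D X (f • w) = S.deriv X f • w + f • D X w)
    (A : V → E →ₗ[R] E)
    (hA_add : ∀ X Y : V, A (X + Y) = A X + A Y)
    (hA_smul : ∀ (f : R) (X : V), A (f • X) = f • A X)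
    (hdDA : ∀ (X Y : V) (w : E),
      D X (A Y w) - A Y (D X w) - (D Y (A X w) - A X (D Y w)) - A ⁅X, Y⁆ w = 0)
    (hAcomm : ∀ (X Y : V) (w : E), A X (A Y w) = A Y (A X w))
    (u : E) (hu : ∀ Y Z : V, A Y (D Z u) = A Z (D Y u))
    (F : V ≃ₗ[R] E) (hF : ∀ X : V, F X = A X u) :
    ∃ mult : V → V → V,
      (∀ X Y : V, mult X Y = F.symm (A X (A Y u))) ∧
      (∀ X Y : V, mult X Y = mult Y X) ∧
      (∀ X Y Z : V, mult (mult X Y) Z = mult X (mult Y Z)) ∧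
      (∀ X : V, mult (F.symm u) X = X) ∧
      IsTorsionFree (fun X Y => F.symm (D X (F Y))) ∧
      IsCompatible (fun X Y => F.symm (D X (F Y))) mult ∧
      IsFManifold R mult (F.symm u) := by
  set mu : V → V → V := fun X Y => F.symm (A X (A Y u)) with hmu
  have hmueq : ∀ X Y : V, mu X Y = F.symm (A X (A Y u)) := fun _ _ => rfl
  have hFm : ∀ X Y : V, F (mu X Y) = A X (A Y u) := fun X Y => F.apply_symm_apply _
  have hAA : ∀ a b : V, A a (F b) = F (mu a b) := fun a b => by rw [hF b, hFm]
  have hswap : ∀ a b : V, A a (F b) = A b (F a) := fun a b => by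
    rw [hF, hF, hAcomm]
  -- commutativity
  have hcommu : ∀ X Y : V, mu X Y = mu Y X := fun X Y =>
    F.injective (by rw [hFm, hFm]; exact hAcomm X Y u)
  -- associativity
  have hassocu : ∀ X Y Z : V, mu (mu X Y) Z = mu X (mu Y Z) := by
    intro X Y Z
    apply F.injective
    have h1 : F (mu (mu X Y) Z) = A X (A Y (A Z u)) := by
      rw [hFm, ← hF Z, hswap, hFm, hAcomm Z X, hAcomm Z Y, hF Z]
    have h2 : F (mu X (mu Y Z)) = A X (A Y (A Z u)) := by
      rw [hFm, ← hF (mu Y Z), hFm]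
    rw [h1, h2]
  -- unit
  have hunit : ∀ X : V, mu (F.symm u) X = X := by
    intro X
    apply F.injective
    rw [hFm, hAcomm, ← hF (F.symm u), F.apply_symm_apply, ← hF X]
  -- bilinearity
  have haddl : ∀ X Y Z : V, mu (X + Y) Z = mu X Z + mu Y Z := by
    intro X Y Z
    rw [hmueq, hmueq, hmueq, hA_add]
    simp [LinearMap.add_apply, map_add]
  have hsmull : ∀ (f : R) (X Y : V), mu (f • X) Y = f • mu X Y := by
    intro f X Y
    rw [hmueq, hmueq, hA_smul]
    simp [LinearMap.smul_apply, map_smul]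
  -- torsion-free
  have hbF : ∀ X Y : V, D X (F Y) - D Y (F X) = F ⁅X, Y⁆ := by
    intro X Y
    have h := hdDA X Y u
    rw [hu Y X] at h
    rw [hF Y, hF X, hF ⁅X, Y⁆, ← sub_eq_zero, ← h]
    abel
  have htf' : IsTorsionFree (fun X Y => F.symm (D X (F Y))) := by
    intro X Y
    show F.symm (D X (F Y)) - F.symm (D Y (F X)) = ⁅X, Y⁆
    rw [← map_sub, hbF, F.symm_apply_apply]
  -- compatibility
  have hFcov : ∀ X Y Z : V, F (covMul (fun a b => F.symm (D a (F b))) mu X Y Z)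
      = D X (A Y (F Z)) - A Y (D X (F Z)) - A Z (D X (F Y)) := by
    intro X Y Z
    simp only [covMul, map_sub, F.apply_symm_apply, hFm]
    rw [← hF Z, hswap (F.symm (D X (F Y))) Z, F.apply_symm_apply,
      ← hF (F.symm (D X (F Z))), F.apply_symm_apply]
    abel
  have hcompat' : IsCompatible (fun X Y => F.symm (D X (F Y))) mu := by
    intro X Y Z
    constructor
    · apply F.injective
      have h := hdDA X Y (F Z)
      have h2 : A Z (D X (F Y)) - A Z (D Y (F X)) = A ⁅X, Y⁆ (F Z) := by
        rw [← map_sub, hbF, hswap]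
      have key : (D X (A Y (F Z)) - A Y (D X (F Z)) - A Z (D X (F Y))) -
          (D Y (A X (F Z)) - A X (D Y (F Z)) - A Z (D Y (F X))) =
          (D X (A Y (F Z)) - A Y (D X (F Z)) -
            (D Y (A X (F Z)) - A X (D Y (F Z))) - A ⁅X, Y⁆ (F Z))
          + (A ⁅X, Y⁆ (F Z) - (A Z (D X (F Y)) - A Z (D Y (F X)))) := by abel
      rw [hFcov X Y Z, hFcov Y X Z, ← sub_eq_zero, key, h, h2]
      abel
    · apply F.injective
      rw [hFcov X Y Z, hFcov X Z Y, hswap Y Z]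
      abel
  refine ⟨mu, hmueq, hcommu, hassocu, hunit, htf', hcompat',
    ⟨haddl, hsmull, hcommu, hassocu, hunit,
      hm_aux mu haddl hcommu hassocu _ htf' hcompat'⟩⟩
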